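/- arXiv:1303.3626 — 2 statements merged into one kernel-verified Lean document; each statement's English description precedes it below -/
import Mathlib

section
/- Let `t` be a valid Patricia trie in which every leaf label has length `ℓ`, and let `v : List Bool` with `|v| = ℓ` and `v ∉ leafLabels t`. Then `insert v t` is valid, `lbl (insert v t)` is a prefix of `lbl t`, every leaf label of `insert v t` has length `ℓ`, and `leafLabels (insert v t) = leafLabels t ∪ {v}`. (Sequential correctness of the paper's insert operation: Cases 1–2 of Invariant 1 together with Lemma `successful-ins-lem`.) -/
inductive PTrie : Type
  | leaf (s : List Bool) : PTrie
  | node (s : List Bool) (l r : PTrie) : PTrie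

/-- Label at the root of a trie. -/
def lbl : PTrie → List Bool
  | .leaf s => s
  | .node s _ _ => s

/-- A trie is valid if for every internal node `node s l r`,
`s ++ [false]` is a prefix of `lbl l` and `s ++ [true]` is a prefix of `lbl r`. -/
def Valid : PTrie → Prop
  | .leaf _ => True
  | .node s l r => ((s ++ [false]) <+: lbl l) ∧ ((s ++ [true]) <+: lbl r) ∧ Valid l ∧ Valid r

/-- Subtree at a position: descend left on `false`, right on `true`. -/
def subtreeAt : PTrie → List Bool → Option PTrie
  | t, [] => some t
  | .leaf _, _ :: _ => none
  | .node _ l r, b :: π => subtreeAt (if b then r else l) π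

/-- Set of binary strings appearing at the leaves. -/
def leafLabels : PTrie → Set (List Bool)
  | .leaf s => {s}
  | .node _ l r => leafLabels l ∪ leafLabels r

/-- Sequential search. -/
def search (v : List Bool) : PTrie → PTrie
  | .leaf s => .leaf s
  | .node s l r =>
    if s <+: v ∧ s ≠ v then
      (if v.getD s.length false then search v r else search v l)
    else .node s l r

/-- Position of the node returned by `search`. -/
def searchPos (v : List Bool) : PTrie → List Bool
  | .leaf _ => []
  | .node s l r =>
    if s <+: v ∧ s ≠ v then
      (if v.getD s.length false then true :: searchPos v r else false :: searchPos v l)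
    else []

/-- Replace the subtree at a position. -/
def replaceAt : PTrie → List Bool → PTrie → PTrie
  | _, [], u => u
  | .leaf s, _ :: _, _ => .leaf s
  | .node s l r, b :: π, u =>
    if b then .node s l (replaceAt r π u) else .node s (replaceAt l π u) r

/-- Longest common prefix of two binary strings. -/
def lcp : List Bool → List Bool → List Bool
  | a :: as, b :: bs => if a = b then a :: lcp as bs else []
  | _, _ => []

/-- Join two tries under a new internal node labelled by the
longest common prefix of their labels. -/
def join (t₁ t₂ : PTrie) : PTrie :=
  if (lbl t₁).getD (lcp (lbl t₁) (lbl t₂)).length true then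
    .node (lcp (lbl t₁) (lbl t₂)) t₂ t₁
  else
    .node (lcp (lbl t₁) (lbl t₂)) t₁ t₂

/-- Sequential insert. -/
def insertT (v : List Bool) : PTrie → PTrie
  | .node s l r =>
    if s <+: v ∧ s ≠ v then
      (if v.getD s.length false then .node s l (insertT v r) else .node s (insertT v l) r)
    else join (.node s l r) (.leaf v)
  | .leaf s => join (.leaf s) (.leaf v)

lemma getD_append_cons (p : List Bool) (x : Bool) (as : List Bool) (d : Bool) :
    (p ++ x :: as).getD p.length d = x := by
  induction p with
  | nil => simp
  | cons a p ih => simpa using ih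

lemma lcp_split {a b : List Bool} (hab : ¬ a <+: b) (hba : ¬ b <+: a) :
    ∃ x y as bs, x ≠ y ∧ a = lcp a b ++ x :: as ∧ b = lcp a b ++ y :: bs := by
  induction a generalizing b with
  | nil => exact absurd (List.nil_prefix) hab
  | cons x as ih =>
    cases b with
    | nil => exact absurd (List.nil_prefix) hba
    | cons y bs =>
      by_cases hxy : x = y
      · subst hxy
        have hab' : ¬ as <+: bs := fun h => hab (List.cons_prefix_cons.mpr ⟨rfl, h⟩)
        have hba' : ¬ bs <+: as := fun h => hba (List.cons_prefix_cons.mpr ⟨rfl, h⟩)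
        obtain ⟨u, w, us, ws, huw, h1, h2⟩ := ih hab' hba'
        have hlc : lcp (x :: as) (x :: bs) = x :: lcp as bs := by simp [lcp]
        refine ⟨u, w, us, ws, huw, ?_, ?_⟩ <;> rw [hlc, List.cons_append]
        · rw [← h1]
        · rw [← h2]
      · exact ⟨x, y, as, bs, hxy, by simp [lcp, hxy], by simp [lcp, hxy]⟩

lemma lcp_prefix_of_prefix {q a b : List Bool} (ha : q <+: a) (hb : q <+: b) :
    q <+: lcp a b := by
  induction q generalizing a b with
  | nil => exact List.nil_prefix
  | cons x qs ih =>
    obtain ⟨as, rfl⟩ := ha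
    obtain ⟨bs, rfl⟩ := hb
    have h0 : qs <+: lcp (qs ++ as) (qs ++ bs) :=
      ih (List.prefix_append qs as) (List.prefix_append qs bs)
    have h1 : x :: qs <+: x :: lcp (qs ++ as) (qs ++ bs) := List.cons_prefix_cons.mpr ⟨rfl, h0⟩
    simpa [lcp] using h1

lemma join_spec (t₁ t₂ : PTrie) (h1 : Valid t₁) (h2 : Valid t₂)
    (hab : ¬ lbl t₁ <+: lbl t₂) (hba : ¬ lbl t₂ <+: lbl t₁) :
    Valid (join t₁ t₂) ∧ lbl (join t₁ t₂) <+: lbl t₁ ∧ lbl (join t₁ t₂) <+: lbl t₂ ∧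
    leafLabels (join t₁ t₂) = leafLabels t₁ ∪ leafLabels t₂ ∧
    (∀ q, q <+: lbl t₁ → q <+: lbl t₂ → q <+: lbl (join t₁ t₂)) := by
  obtain ⟨x, y, as, bs, hxy, h1e, h2e⟩ := lcp_split hab hba
  have hq : ∀ q, q <+: lbl t₁ → q <+: lbl t₂ → q <+: lcp (lbl t₁) (lbl t₂) :=
    fun q hq1 hq2 => lcp_prefix_of_prefix hq1 hq2
  unfold join
  generalize lcp (lbl t₁) (lbl t₂) = p at h1e h2e hq ⊢
  have hgd : (lbl t₁).getD p.length true = x := by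
    rw [h1e]; exact getD_append_cons _ _ _ _
  have hpa : p <+: lbl t₁ := ⟨x :: as, h1e.symm⟩
  have hpb : p <+: lbl t₂ := ⟨y :: bs, h2e.symm⟩
  rw [hgd]
  cases x with
  | true =>
    have hy : y = false := by cases y with | false => rfl | true => exact absurd rfl hxy
    subst hy
    rw [if_pos rfl]
    refine ⟨⟨?_, ?_, h2, h1⟩, hpa, hpb, ?_, hq⟩
    · exact ⟨bs, by rw [h2e]; simp⟩
    · exact ⟨as, by rw [h1e]; simp⟩
    · simp [leafLabels, lbl, Set.union_comm]
  | false =>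
    have hy : y = true := by cases y with | false => exact absurd rfl hxy | true => rfl
    subst hy
    rw [if_neg Bool.false_ne_true]
    refine ⟨⟨?_, ?_, h1, h2⟩, hpa, hpb, ?_, hq⟩
    · exact ⟨as, by rw [h1e]; simp⟩
    · exact ⟨bs, by rw [h2e]; simp⟩
    · simp [leafLabels, lbl]

lemma exists_leaf (t : PTrie) (hv : Valid t) :
    ∃ w ∈ leafLabels t, lbl t <+: w := by
  induction t with
  | leaf s => exact ⟨s, rfl, List.prefix_refl s⟩
  | node s l r ihl ihr =>
    obtain ⟨hl, hr, hvl, hvr⟩ := hv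
    obtain ⟨w, hw, hpw⟩ := ihl hvl
    exact ⟨w, Or.inl hw, ((List.prefix_append s [false]).trans hl).trans hpw⟩

lemma insert_aux (t : PTrie) (ℓ : ℕ) (hv : Valid t)
    (hleaf : ∀ s ∈ leafLabels t, s.length = ℓ)
    (v : List Bool) (hvlen : v.length = ℓ) (hnotin : v ∉ leafLabels t) :
    Valid (insertT v t) ∧
    lbl (insertT v t) <+: lbl t ∧
    (∀ q, q <+: lbl t → q <+: v → q <+: lbl (insertT v t)) ∧
    (∀ s ∈ leafLabels (insertT v t), s.length = ℓ) ∧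
    leafLabels (insertT v t) = leafLabels t ∪ {v} := by
  induction t with
  | leaf s =>
    have hne : s ≠ v := fun h => hnotin (h ▸ rfl)
    have hlen : s.length = ℓ := hleaf s rfl
    have hab : ¬ (lbl (PTrie.leaf s)) <+: (lbl (PTrie.leaf v)) := fun h =>
      hne (List.IsPrefix.eq_of_length h (hlen.trans hvlen.symm))
    have hba : ¬ (lbl (PTrie.leaf v)) <+: (lbl (PTrie.leaf s)) := fun h =>
      hne (List.IsPrefix.eq_of_length h (hvlen.trans hlen.symm)).symm
    obtain ⟨jv, jp1, jp2, jl, jq⟩ := join_spec (PTrie.leaf s) (PTrie.leaf v)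
      (by trivial) (by trivial) hab hba
    refine ⟨jv, jp1, fun q hq1 hq2 => jq q hq1 hq2, ?_, ?_⟩
    · intro s' hs'
      rw [show insertT v (PTrie.leaf s) = join (PTrie.leaf s) (PTrie.leaf v) from rfl, jl] at hs'
      rcases hs' with h | h
      · exact hleaf s' h
      · simp only [leafLabels, Set.mem_singleton_iff] at h; rw [h, hvlen]
    · rw [show insertT v (PTrie.leaf s) = join (PTrie.leaf s) (PTrie.leaf v) from rfl, jl]
      rfl
  | node s l r ihl ihr =>
    obtain ⟨hl, hr, hvl, hvr⟩ := hv
    -- every label strictly shorter than ℓ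
    obtain ⟨w, hw, hpw⟩ := exists_leaf l hvl
    have hwlen : w.length = ℓ := hleaf w (Or.inl hw)
    have hslt : s.length < ℓ := by
      have h1 : (s ++ [false]).length ≤ w.length := (hl.trans hpw).length_le
      simpa [hwlen] using h1
    by_cases hsv : s <+: v
    · have hne : s ≠ v := fun h => by rw [h, hvlen] at hslt; exact lt_irrefl _ hslt
      obtain ⟨d, hd⟩ := hsv
      cases d with
      | nil => exfalso; rw [← hd] at hvlen; simp at hvlen; omega
      | cons b rest =>
        have hgd : v.getD s.length false = b := by rw [← hd]; exact getD_append_cons _ _ _ _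
        cases b with
        | true =>
          have hstep : insertT v (PTrie.node s l r) = PTrie.node s l (insertT v r) := by
            rw [insertT, if_pos ⟨⟨_, hd⟩, hne⟩, hgd]; simp
          obtain ⟨iv, ip, iq, il, ill⟩ := ihr hvr (fun s' hs' => hleaf s' (Or.inr hs'))
            (fun h => hnotin (Or.inr h))
          rw [hstep]
          refine ⟨⟨hl, iq _ hr ⟨rest, by rw [← hd]; simp⟩, hvl, iv⟩,
            List.prefix_refl s, fun q hq1 _ => hq1, ?_, ?_⟩
          · intro s' hs'
            rcases hs' with h | h
            · exact hleaf s' (Or.inl h)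
            · rw [ill] at h
              rcases h with h | h
              · exact hleaf s' (Or.inr h)
              · rw [Set.mem_singleton_iff.mp h, hvlen]
          · show leafLabels l ∪ leafLabels (insertT v r) = (leafLabels l ∪ leafLabels r) ∪ {v}
            rw [ill, Set.union_assoc]
        | false =>
          have hstep : insertT v (PTrie.node s l r) = PTrie.node s (insertT v l) r := by
            rw [insertT, if_pos ⟨⟨_, hd⟩, hne⟩, hgd]; simp
          obtain ⟨iv, ip, iq, il, ill⟩ := ihl hvl (fun s' hs' => hleaf s' (Or.inl hs'))
            (fun h => hnotin (Or.inl h))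
          rw [hstep]
          refine ⟨⟨iq _ hl ⟨rest, by rw [← hd]; simp⟩, hr, iv, hvr⟩,
            List.prefix_refl s, fun q hq1 _ => hq1, ?_, ?_⟩
          · intro s' hs'
            rcases hs' with h | h
            · rw [ill] at h
              rcases h with h | h
              · exact hleaf s' (Or.inl h)
              · rw [Set.mem_singleton_iff.mp h, hvlen]
            · exact hleaf s' (Or.inr h)
          · show leafLabels (insertT v l) ∪ leafLabels r = (leafLabels l ∪ leafLabels r) ∪ {v}
            rw [ill, Set.union_right_comm]
    · have hstep : insertT v (PTrie.node s l r) = join (PTrie.node s l r) (PTrie.leaf v) := by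
        rw [insertT, if_neg (fun h => hsv h.1)]
      have hba : ¬ (lbl (PTrie.leaf v)) <+: (lbl (PTrie.node s l r)) := by
        intro h
        have := h.length_le
        simp only [lbl] at this
        rw [hvlen] at this
        exact absurd (lt_of_le_of_lt this hslt) (lt_irrefl _)
      obtain ⟨jv, jp1, _, jl, jq⟩ := join_spec (PTrie.node s l r) (PTrie.leaf v)
        ⟨hl, hr, hvl, hvr⟩ (by trivial) hsv hba
      rw [hstep]
      refine ⟨jv, jp1, fun q hq1 hq2 => jq q hq1 hq2, ?_, ?_⟩
      · intro s' hs'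
        rw [jl] at hs'
        rcases hs' with h | h
        · exact hleaf s' h
        · simp only [leafLabels, Set.mem_singleton_iff] at h; rw [h, hvlen]
      · rw [jl]; rfl

/-- Sequential correctness of the insert operation. -/
theorem insert_correct (t : PTrie) (ℓ : ℕ) (hv : Valid t)
    (hleaf : ∀ s ∈ leafLabels t, s.length = ℓ)
    (v : List Bool) (hvlen : v.length = ℓ) (hnotin : v ∉ leafLabels t) :
    Valid (insertT v t) ∧
    lbl (insertT v t) <+: lbl t ∧
    (∀ s ∈ leafLabels (insertT v t), s.length = ℓ) ∧
    leafLabels (insertT v t) = leafLabels t ∪ {v} := by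
  obtain ⟨a, b, c, d, e⟩ := insert_aux t ℓ hv hleaf v hvlen hnotin
  exact ⟨a, b, d, e⟩
end

section
/- Let `t` be a valid Patricia trie in which every leaf label has length `ℓ`, let `v_i : List Bool` with `|v_i| = ℓ` and `v_i ∉ leafLabels t`, and set `t' = insert v_i t`. Suppose `v_d ∈ leafLabels t` with `v_d ≠ v_i`, and `π` is a position with `subtreeAt t' π = some (node s c₀ c₁)` where for some bit `b` the child `c_b` equals `leaf v_d`; write `u'` for the other child. Then `replaceAt t' π u'` is valid and `leafLabels (replaceAt t' π u') = (leafLabels t \ {v_d}) ∪ {v_i}`. (Sequential content of the general case of the paper's replace operation, Lemma `successful-general-mov-lem`: the replace atomically deletes `v_d` and inserts `v_i`.) -/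
section Helpers

lemma prefix_getD' {s x : List Bool} {c : Bool} (h : s ++ [c] <+: x) :
    x[s.length]? = some c := by
  obtain ⟨r, rfl⟩ := h
  rw [List.append_assoc, List.getElem?_append_right le_rfl]
  simp

lemma not_both_prefix {s x : List Bool} (h1 : s ++ [false] <+: x)
    (h2 : s ++ [true] <+: x) : False := by
  have := prefix_getD' h1
  rw [prefix_getD' h2] at this
  simp at this

lemma valid_prefix : ∀ u, Valid u → ∀ x ∈ leafLabels u, lbl u <+: x := by
  intro u
  induction u with
  | leaf s => intro _ x hx; simp only [leafLabels, Set.mem_singleton_iff] at hx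
              subst hx; exact List.prefix_refl _
  | node s l r ihl ihr =>
    rintro ⟨h1, h2, hl, hr⟩ x hx
    rcases hx with hx | hx
    · exact ((List.prefix_append _ _).trans h1).trans (ihl hl x hx)
    · exact ((List.prefix_append _ _).trans h2).trans (ihr hr x hx)

lemma leaf_bit_left {s : List Bool} {l r : PTrie} (h : Valid (.node s l r)) :
    ∀ x ∈ leafLabels l, s ++ [false] <+: x := fun x hx =>
  h.1.trans (valid_prefix l h.2.2.1 x hx)

lemma leaf_bit_right {s : List Bool} {l r : PTrie} (h : Valid (.node s l r)) :
    ∀ x ∈ leafLabels r, s ++ [true] <+: x := fun x hx =>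
  h.2.1.trans (valid_prefix r h.2.2.2 x hx)

lemma leafLabels_join (t₁ t₂ : PTrie) :
    leafLabels (join t₁ t₂) = leafLabels t₁ ∪ leafLabels t₂ := by
  unfold join; split <;> simp [leafLabels, Set.union_comm]

lemma leafLabels_insertT (v : List Bool) (t : PTrie) :
    leafLabels (insertT v t) = leafLabels t ∪ {v} := by
  induction t with
  | leaf s => rw [insertT, leafLabels_join]; rfl
  | node s l r ihl ihr =>
    rw [insertT]
    split
    · split
      · simp only [leafLabels, ihr]; ext x
        simp only [Set.mem_union, Set.mem_singleton_iff]; tauto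
      · simp only [leafLabels, ihl]; ext x
        simp only [Set.mem_union, Set.mem_singleton_iff]; tauto
    · rw [leafLabels_join]; rfl

lemma leafLabels_nonempty : ∀ t : PTrie, ∃ x, x ∈ leafLabels t := by
  intro t
  induction t with
  | leaf s => exact ⟨s, rfl⟩
  | node s l r ihl _ => obtain ⟨x, hx⟩ := ihl; exact ⟨x, Or.inl hx⟩

lemma prefix_lcp : ∀ (a b c : List Bool), c <+: a → c <+: b → c <+: lcp a b
  | _, _, [], _, _ => List.nil_prefix
  | [], _, _ :: _, h1, _ => absurd h1 (by simp)
  | _ :: _, [], _ :: _, _, h2 => absurd h2 (by simp)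
  | x :: as, y :: bs, d :: cs, h1, h2 => by
    obtain ⟨rfl, h1'⟩ := List.cons_prefix_cons.mp h1
    obtain ⟨rfl, h2'⟩ := List.cons_prefix_cons.mp h2
    simp only [lcp, if_pos rfl]
    exact List.cons_prefix_cons.mpr ⟨rfl, prefix_lcp _ _ _ h1' h2'⟩

lemma lcp_spec : ∀ (a b : List Bool), ¬ a <+: b → ¬ b <+: a →
    ((lcp a b) ++ [a.getD (lcp a b).length true] <+: a ∧
     (lcp a b) ++ [b.getD (lcp a b).length true] <+: b ∧
     a.getD (lcp a b).length true ≠ b.getD (lcp a b).length true)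
  | [], b, h1, _ => absurd List.nil_prefix h1
  | a :: as, [], _, h2 => absurd List.nil_prefix h2
  | x :: as, y :: bs, h1, h2 => by
    by_cases hxy : x = y
    · subst hxy
      have h1' : ¬ as <+: bs := fun h => h1 (List.cons_prefix_cons.mpr ⟨rfl, h⟩)
      have h2' : ¬ bs <+: as := fun h => h2 (List.cons_prefix_cons.mpr ⟨rfl, h⟩)
      obtain ⟨g1, g2, g3⟩ := lcp_spec as bs h1' h2'
      simp only [lcp, if_pos rfl, List.length_cons, List.getD_cons_succ]
      exact ⟨List.cons_prefix_cons.mpr ⟨rfl, g1⟩,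
             List.cons_prefix_cons.mpr ⟨rfl, g2⟩, g3⟩
    · simp only [lcp, if_neg hxy, List.length_nil, List.getD_cons_zero,
        List.nil_append]
      exact ⟨⟨as, rfl⟩, ⟨bs, rfl⟩, hxy⟩

lemma lbl_join (t₁ t₂ : PTrie) : lbl (join t₁ t₂) = lcp (lbl t₁) (lbl t₂) := by
  unfold join; split <;> rfl

lemma valid_join {t₁ t₂ : PTrie} (h₁ : Valid t₁) (h₂ : Valid t₂)
    (hp1 : ¬ lbl t₁ <+: lbl t₂) (hp2 : ¬ lbl t₂ <+: lbl t₁) :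
    Valid (join t₁ t₂) := by
  obtain ⟨g1, g2, g3⟩ := lcp_spec (lbl t₁) (lbl t₂) hp1 hp2
  unfold join
  split_ifs with h
  · refine ⟨?_, ?_, h₂, h₁⟩
    · have : (lbl t₂).getD (lcp (lbl t₁) (lbl t₂)).length true = false := by
        rw [h] at g3; revert g3
        cases (lbl t₂).getD (lcp (lbl t₁) (lbl t₂)).length true <;> simp
      rwa [← this]
    · rwa [← h]
  · simp only [Bool.not_eq_true] at h
    refine ⟨?_, ?_, h₁, h₂⟩
    · rwa [← h]
    · have : (lbl t₂).getD (lcp (lbl t₁) (lbl t₂)).length true = true := by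
        rw [h] at g3; revert g3
        cases (lbl t₂).getD (lcp (lbl t₁) (lbl t₂)).length true <;> simp
      rwa [← this]

lemma lbl_insertT_prefix (v : List Bool) : ∀ (t : PTrie) (c : List Bool),
    c <+: lbl t → c <+: v → c <+: lbl (insertT v t) := by
  intro t
  induction t with
  | leaf s => intro c h1 h2; rw [insertT, lbl_join]; exact prefix_lcp _ _ _ h1 h2
  | node s l r _ _ =>
    intro c h1 h2
    rw [insertT]
    split
    · split <;> exact h1
    · rw [lbl_join]; exact prefix_lcp _ _ _ h1 h2

lemma bit_prefix {s v : List Bool} (h : s <+: v) (hne : s ≠ v) :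
    s ++ [v.getD s.length false] <+: v := by
  obtain ⟨r, rfl⟩ := h
  cases r with
  | nil => simp at hne
  | cons c r' =>
    have : (s ++ c :: r').getD s.length false = c := by
      rw [List.getD_eq_getElem?_getD, List.getElem?_append_right le_rfl]
      simp
    rw [this]
    exact ⟨r', by simp⟩

lemma valid_insertT {ℓ : ℕ} (v : List Bool) (hv : v.length = ℓ) :
    ∀ t : PTrie, Valid t → (∀ x ∈ leafLabels t, x.length = ℓ) →
    v ∉ leafLabels t → Valid (insertT v t) := by
  intro t
  induction t with
  | leaf s =>
    intro _ hlen hnot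
    have hs : s.length = ℓ := hlen s rfl
    have hne : s ≠ v := fun h => hnot (by simp [leafLabels, h])
    rw [insertT]
    refine valid_join trivial trivial ?_ ?_
    · intro h; exact hne (h.eq_of_length (by simp [lbl, hs, hv]))
    · intro h; exact hne (h.eq_of_length (by simp [lbl, hs, hv])).symm
  | node s l r ihl ihr =>
    intro hval hlen hnot
    obtain ⟨x, hx⟩ := leafLabels_nonempty (.node s l r)
    have hsx : s <+: x := valid_prefix _ hval x hx
    have hxlen : x.length = ℓ := hlen x hx
    have hvnx : v ≠ x := fun h => hnot (h ▸ hx)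
    rw [insertT]
    split_ifs with hc hd
    · obtain ⟨hpre, hne⟩ := hc
      have hbit := bit_prefix hpre hne
      -- insert into right
      rw [hd] at hbit
      refine ⟨hval.1, ?_, hval.2.2.1, ?_⟩
      · exact lbl_insertT_prefix v r _ hval.2.1 hbit
      · exact ihr hval.2.2.2 (fun y hy => hlen y (Or.inr hy))
          (fun h => hnot (Or.inr h))
    · obtain ⟨hpre, hne⟩ := hc
      have hbit := bit_prefix hpre hne
      simp only [Bool.not_eq_true] at hd
      rw [hd] at hbit
      refine ⟨?_, hval.2.1, ?_, hval.2.2.2⟩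
      · exact lbl_insertT_prefix v l _ hval.1 hbit
      · exact ihl hval.2.2.1 (fun y hy => hlen y (Or.inl hy))
          (fun h => hnot (Or.inl h))
    · push_neg at hc
      refine valid_join (t₂ := .leaf v) hval trivial ?_ ?_
      · intro h
        have hsv : s = v := hc h
        subst hsv
        exact hvnx (hsx.eq_of_length (by simp [lbl, hv, hxlen]))
      · intro h
        exact hvnx (((h.trans hsx).eq_of_length (by simp [lbl, hv, hxlen])))

lemma subtree_leafLabels_subset : ∀ (π : List Bool) (u w : PTrie),
    subtreeAt u π = some w → leafLabels w ⊆ leafLabels u := by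
  intro π
  induction π with
  | nil => intro u w h; rw [subtreeAt] at h; cases h; exact subset_rfl
  | cons x π' ih =>
    intro u w h
    cases u with
    | leaf s => rw [subtreeAt] at h; cases h
    | node s l r =>
      rw [subtreeAt] at h
      cases x
      · exact (ih l w (by simpa using h)).trans Set.subset_union_left
      · exact (ih r w (by simpa using h)).trans Set.subset_union_right

lemma lbl_replaceAt : ∀ (π : List Bool) (u : PTrie) (s : List Bool)
    (c₀ c₁ : PTrie) (b : Bool), Valid u →
    subtreeAt u π = some (.node s c₀ c₁) →
    lbl u <+: lbl (replaceAt u π (if b then c₀ else c₁)) := by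
  intro π
  induction π with
  | nil =>
    intro u s c₀ c₁ b hval h
    rw [subtreeAt] at h
    cases h
    rw [replaceAt]
    cases b
    · exact (List.prefix_append _ _).trans hval.2.1
    · exact (List.prefix_append _ _).trans hval.1
  | cons x π' ih =>
    intro u s c₀ c₁ b hval h
    cases u with
    | leaf s' => rw [subtreeAt] at h; cases h
    | node s' l r =>
      rw [replaceAt]
      cases x <;> simp only [if_true, if_false, Bool.false_eq_true] <;> rfl

lemma delete_correct : ∀ (π : List Bool) (u : PTrie) (s : List Bool)
    (c₀ c₁ : PTrie) (b : Bool) (vd : List Bool), Valid u →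
    subtreeAt u π = some (.node s c₀ c₁) →
    (if b then c₁ else c₀) = PTrie.leaf vd →
    Valid (replaceAt u π (if b then c₀ else c₁)) ∧
    leafLabels (replaceAt u π (if b then c₀ else c₁)) = leafLabels u \ {vd} := by
  intro π
  induction π with
  | nil =>
    intro u s c₀ c₁ b vd hval h hb
    rw [subtreeAt] at h
    cases h
    rw [replaceAt]
    cases b <;> simp only [if_true, if_false, Bool.false_eq_true] at hb ⊢
    · -- b = false : c₀ = leaf vd, keep c₁
      subst hb
      have hvd0 : s ++ [false] <+: vd := hval.1
      have hnot : vd ∉ leafLabels c₁ := fun h =>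
        not_both_prefix hvd0 (leaf_bit_right hval vd h)
      refine ⟨hval.2.2.2, ?_⟩
      show leafLabels c₁ = (leafLabels (.leaf vd) ∪ leafLabels c₁) \ {vd}
      rw [Set.union_diff_distrib, Set.diff_singleton_eq_self hnot]
      simp [leafLabels]
    · subst hb
      have hvd1 : s ++ [true] <+: vd := hval.2.1
      have hnot : vd ∉ leafLabels c₀ := fun h =>
        not_both_prefix (leaf_bit_left hval vd h) hvd1
      refine ⟨hval.2.2.1, ?_⟩
      show leafLabels c₀ = (leafLabels c₀ ∪ leafLabels (.leaf vd)) \ {vd}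
      rw [Set.union_diff_distrib, Set.diff_singleton_eq_self hnot]
      simp [leafLabels]
  | cons x π' ih =>
    intro u s c₀ c₁ b vd hval h hb
    cases u with
    | leaf s' => rw [subtreeAt] at h; cases h
    | node s' l r =>
      rw [subtreeAt] at h
      have hvd_mem : vd ∈ leafLabels (PTrie.node s c₀ c₁) := by
        cases b <;> simp only [if_true, if_false, Bool.false_eq_true] at hb
        · exact Or.inl (hb ▸ rfl)
        · exact Or.inr (hb ▸ rfl)
      cases x <;> simp only [if_true, if_false, Bool.false_eq_true] at h
      · -- descend left
        obtain ⟨ihv, ihs⟩ := ih l s c₀ c₁ b vd hval.2.2.1 h hb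
        have hvdl : vd ∈ leafLabels l :=
          subtree_leafLabels_subset π' l _ h hvd_mem
        have hnotr : vd ∉ leafLabels r := fun hm =>
          not_both_prefix (leaf_bit_left hval vd hvdl) (leaf_bit_right hval vd hm)
        rw [replaceAt]
        simp only [Bool.false_eq_true, if_false]
        constructor
        · exact ⟨hval.1.trans (lbl_replaceAt π' l s c₀ c₁ b hval.2.2.1 h),
            hval.2.1, ihv, hval.2.2.2⟩
        · show leafLabels _ ∪ leafLabels r = (leafLabels l ∪ leafLabels r) \ {vd}
          rw [ihs, Set.union_diff_distrib, Set.diff_singleton_eq_self hnotr]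
      · obtain ⟨ihv, ihs⟩ := ih r s c₀ c₁ b vd hval.2.2.2 h hb
        have hvdr : vd ∈ leafLabels r :=
          subtree_leafLabels_subset π' r _ h hvd_mem
        have hnotl : vd ∉ leafLabels l := fun hm =>
          not_both_prefix (leaf_bit_left hval vd hm) (leaf_bit_right hval vd hvdr)
        rw [replaceAt]
        simp only [if_true]
        constructor
        · exact ⟨hval.1, hval.2.1.trans
            (lbl_replaceAt π' r s c₀ c₁ b hval.2.2.2 h), hval.2.2.1, ihv⟩
        · show leafLabels l ∪ leafLabels _ = (leafLabels l ∪ leafLabels r) \ {vd}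
          rw [ihs, Set.union_diff_distrib, Set.diff_singleton_eq_self hnotl]

end Helpers

/-- Sequential content of the general case of the replace operation:
delete `v_d` from `insert v_i t`. -/
theorem replace_general_correct (t : PTrie) (ℓ : ℕ) (hv : Valid t)
    (hleaf : ∀ s ∈ leafLabels t, s.length = ℓ)
    (vi vd : List Bool) (hvi : vi.length = ℓ) (hnotin : vi ∉ leafLabels t)
    (hvd : vd ∈ leafLabels t) (hne : vd ≠ vi)
    (π : List Bool) (s : List Bool) (c₀ c₁ : PTrie) (b : Bool)
    (hsub : subtreeAt (insertT vi t) π = some (PTrie.node s c₀ c₁))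
    (hb : (if b then c₁ else c₀) = PTrie.leaf vd) :
    Valid (replaceAt (insertT vi t) π (if b then c₀ else c₁)) ∧
    leafLabels (replaceAt (insertT vi t) π (if b then c₀ else c₁)) =
      (leafLabels t \ {vd}) ∪ {vi} := by
  have hval' : Valid (insertT vi t) := valid_insertT vi hvi t hv hleaf hnotin
  obtain ⟨h1, h2⟩ := delete_correct π (insertT vi t) s c₀ c₁ b vd hval' hsub hb
  refine ⟨h1, ?_⟩
  rw [h2, leafLabels_insertT, Set.union_diff_distrib,
    Set.diff_singleton_eq_self (show vd ∉ ({vi} : Set (List Bool)) by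
      simpa using hne)]
end
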